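/- Let H be a finite-dimensional complex inner product space, let U₁ and U₂ be linear subspaces of H, and let P₁, P₂ and P denote the orthogonal projections of H onto U₁, U₂ and U₁ ∩ U₂ respectively, regarded as linear maps H → H. Then, as subsets of the Hermitian linear maps on H and with Minkowski sum, {A Hermitian : P ∘ A ∘ P = 0} = {B Hermitian : P₁ ∘ B ∘ P₁ = 0} + {C Hermitian : P₂ ∘ C ∘ P₂ = 0}; in particular, every Hermitian A with P A P = 0 can be written as A = B + C with B, C Hermitian, P₁ B P₁ = 0 and P₂ C P₂ = 0. -/

import Mathlib

open Pointwise

/-- The orthogonal projection onto a subspace `U`, regarded as a linear map `H → H`. -/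
noncomputable def projOn {H : Type*} [NormedAddCommGroup H] [InnerProductSpace ℂ H]
    [FiniteDimensional ℂ H] (U : Submodule ℂ H) : H →ₗ[ℂ] H :=
  U.subtype ∘ₗ (U.orthogonalProjectionOnto : H →L[ℂ] U).toLinearMap

section Aux

variable {H : Type*} [NormedAddCommGroup H] [InnerProductSpace ℂ H] [FiniteDimensional ℂ H]

lemma projOn_apply (U : Submodule ℂ H) (x : H) :
    projOn U x = (U.orthogonalProjectionOnto x : H) := rfl

lemma projOn_mem (U : Submodule ℂ H) (x : H) : projOn U x ∈ U :=
  (U.orthogonalProjectionOnto x).2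

lemma projOn_eq_self (U : Submodule ℂ H) {x : H} (hx : x ∈ U) : projOn U x = x := by
  rw [projOn_apply, ← Submodule.starProjection_apply, Submodule.starProjection_eq_self_iff.2 hx]

lemma projOn_isSymmetric (U : Submodule ℂ H) : (projOn U).IsSymmetric := by
  intro x y
  exact Submodule.starProjection_isSymmetric (K := U) x y

lemma projOn_comp_of_le {U V : Submodule ℂ H} (h : U ≤ V) :
    projOn V ∘ₗ projOn U = projOn U := by
  ext x
  exact projOn_eq_self V (h (projOn_mem U x))

lemma comp_projOn_of_le {U V : Submodule ℂ H} (h : U ≤ V) :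
    projOn U ∘ₗ projOn V = projOn U := by
  ext x
  simpa [projOn_apply] using
    congrArg (Submodule.subtype U) (Submodule.orthogonalProjectionOnto_starProjection_of_le h x)

lemma projOn_star (U : Submodule ℂ H) : star (projOn U) = projOn U :=
  (LinearMap.isSymmetric_iff_isSelfAdjoint _).1 (projOn_isSymmetric U)

lemma easy_aux {U V : Submodule ℂ H} (h : V ≤ U) (B : H →ₗ[ℂ] H)
    (hB : projOn U ∘ₗ B ∘ₗ projOn U = 0) : projOn V ∘ₗ B ∘ₗ projOn V = 0 := by
  calc projOn V ∘ₗ B ∘ₗ projOn V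
      = (projOn V ∘ₗ projOn U) ∘ₗ B ∘ₗ (projOn U ∘ₗ projOn V) := by
        rw [comp_projOn_of_le h, projOn_comp_of_le h]
    _ = projOn V ∘ₗ (projOn U ∘ₗ B ∘ₗ projOn U) ∘ₗ projOn V := by
        simp only [LinearMap.comp_assoc]
    _ = 0 := by rw [hB]; simp

lemma exists_T (U₁ U₂ : Submodule ℂ H) :
    ∃ T : H →ₗ[ℂ] H, T ∘ₗ projOn U₂ = 0 ∧
      T ∘ₗ projOn U₁ = projOn U₁ - projOn (U₁ ⊓ U₂) := by
  set V : Submodule ℂ H := U₁ ⊓ U₂ with hV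
  set W : Submodule ℂ H := U₂ ⊓ Vᗮ with hW
  set K : Submodule ℂ H := W ⊔ (U₁ ⊔ U₂)ᗮ with hK
  have hcompl : IsCompl U₁ K := by
    constructor
    · rw [disjoint_iff]
      ext x
      simp only [Submodule.mem_inf, Submodule.mem_bot]
      constructor
      · rintro ⟨hx1, hxK⟩
        rw [hK, Submodule.mem_sup] at hxK
        obtain ⟨w, hw, z, hz, rfl⟩ := hxK
        have hzsup : z ∈ U₁ ⊔ U₂ := by
          have : (w + z) - w ∈ U₁ ⊔ U₂ :=
            Submodule.sub_mem _ (Submodule.mem_sup_left hx1)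
              (Submodule.mem_sup_right hw.1)
          simpa using this
        have hz0 : z = 0 := by
          have := hz z hzsup
          rwa [inner_self_eq_zero] at this
        subst hz0
        have hwV : w ∈ V := ⟨by simpa using hx1, hw.1⟩
        have : w = 0 := by
          have := hw.2 w hwV
          rwa [inner_self_eq_zero] at this
        simp [this]
      · rintro rfl; exact ⟨Submodule.zero_mem _, Submodule.zero_mem _⟩
    · rw [codisjoint_iff]
      have h2 : U₂ ≤ U₁ ⊔ W := by
        intro u hu
        have h1 : projOn V u ∈ U₁ := ((projOn_mem V u).1 : _)
        have h2' : u - projOn V u ∈ W := by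
          refine ⟨Submodule.sub_mem _ hu ((projOn_mem V u).2), ?_⟩
          exact Submodule.sub_starProjection_mem_orthogonal u
        have : u = projOn V u + (u - projOn V u) := by abel
        rw [this]
        exact Submodule.add_mem _ (Submodule.mem_sup_left h1)
          (Submodule.mem_sup_right h2')
      have hsup : U₁ ⊔ K = (U₁ ⊔ U₂) ⊔ (U₁ ⊔ U₂)ᗮ := by
        rw [hK, ← sup_assoc]
        congr 1
        refine le_antisymm ?_ ?_
        · exact sup_le (le_sup_left) (le_trans inf_le_left le_sup_right)
        · exact sup_le (le_sup_left) (le_trans h2 (sup_le le_sup_left le_sup_right))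
      rw [hsup, Submodule.sup_orthogonal_of_hasOrthogonalProjection]
  refine ⟨(LinearMap.id - projOn V) ∘ₗ U₁.subtype ∘ₗ (U₁.projectionOnto K hcompl), ?_, ?_⟩
  · ext x
    set u : H := projOn U₂ x with hu
    have huU₂ : u ∈ U₂ := projOn_mem U₂ x
    have hdecomp : u = projOn V u + (u - projOn V u) := by abel
    have ha : projOn V u ∈ U₁ := (projOn_mem V u).1
    have hb : u - projOn V u ∈ K := by
      apply Submodule.mem_sup_left
      exact ⟨Submodule.sub_mem _ huU₂ (projOn_mem V u).2,
        Submodule.sub_starProjection_mem_orthogonal u⟩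
    have hproj : (U₁.projectionOnto K hcompl) u = ⟨projOn V u, ha⟩ := by
      conv_lhs => rw [hdecomp]
      rw [map_add, Submodule.projectionOnto_apply_of_mem_right hcompl hb, add_zero]
      exact Submodule.projectionOnto_apply_left hcompl ⟨projOn V u, ha⟩
    simp only [LinearMap.comp_apply, LinearMap.zero_apply]
    rw [← hu, hproj]
    simp only [Submodule.coe_subtype, LinearMap.sub_apply, LinearMap.id_apply]
    rw [projOn_eq_self V (projOn_mem V u)]
    simp
  · ext x
    set u : H := projOn U₁ x with hu
    have huU₁ : u ∈ U₁ := projOn_mem U₁ x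
    have hproj : (U₁.projectionOnto K hcompl) u = ⟨u, huU₁⟩ :=
      Submodule.projectionOnto_apply_left hcompl ⟨u, huU₁⟩
    simp only [LinearMap.comp_apply, LinearMap.sub_apply]
    rw [← hu, hproj]
    simp only [Submodule.coe_subtype, LinearMap.sub_apply, LinearMap.id_apply]
    have hVp : projOn V u = projOn V x := by
      have := LinearMap.congr_fun (comp_projOn_of_le (inf_le_left : V ≤ U₁)) x
      simpa [hu, LinearMap.comp_apply] using this
    rw [hVp, hu]

lemma main_aux (U₁ U₂ : Submodule ℂ H) (A : H →ₗ[ℂ] H) (hA : A.IsSymmetric)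
    (hA0 : projOn (U₁ ⊓ U₂) ∘ₗ A ∘ₗ projOn (U₁ ⊓ U₂) = 0) :
    ∃ B C : H →ₗ[ℂ] H, B.IsSymmetric ∧ C.IsSymmetric ∧
      projOn U₁ ∘ₗ B ∘ₗ projOn U₁ = 0 ∧ projOn U₂ ∘ₗ C ∘ₗ projOn U₂ = 0 ∧
      A = B + C := by
  obtain ⟨T, hT2, hT1⟩ := exists_T U₁ U₂
  set p : H →ₗ[ℂ] H := projOn (U₁ ⊓ U₂) with hp
  set p₁ : H →ₗ[ℂ] H := projOn U₁ with hp₁def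
  set p₂ : H →ₗ[ℂ] H := projOn U₂ with hp₂def
  set S : H →ₗ[ℂ] H := star T with hS
  have hT2' : T * p₂ = 0 := hT2
  have hT1' : T * p₁ = p₁ - p := hT1
  have hstarA : star A = A := (LinearMap.isSymmetric_iff_isSelfAdjoint A).1 hA
  have hsp : star p = p := projOn_star _
  have hsp₁ : star p₁ = p₁ := projOn_star _
  have hsp₂ : star p₂ = p₂ := projOn_star _
  have h2S : p₂ * S = 0 := by
    have h := congrArg star hT2'
    rwa [star_mul, hsp₂, star_zero] at h
  have h1S : p₁ * S = p₁ - p := by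
    have h := congrArg star hT1'
    rwa [star_mul, hsp₁, star_sub, hsp₁, hsp] at h
  have hpp₁ : p * p₁ = p := comp_projOn_of_le inf_le_left
  have hp₁p : p₁ * p = p := projOn_comp_of_le inf_le_left
  have hA0' : p * A * p = 0 := by
    have h : p * (A * p) = 0 := hA0
    rwa [← mul_assoc] at h
  set C : H →ₗ[ℂ] H := S * A * T + S * A * p + p * A * T with hC
  have hCstar : star C = C := by
    rw [hC]
    simp only [hS, star_add, star_mul, star_star, hstarA, hsp]
    noncomm_ring
  have hCsym : C.IsSymmetric := (LinearMap.isSymmetric_iff_isSelfAdjoint C).2 hCstar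
  set B : H →ₗ[ℂ] H := A - C with hB
  have hBsym : B.IsSymmetric := hA.sub hCsym
  have h2 : p₂ * C * p₂ = 0 := by
    calc p₂ * C * p₂
        = (p₂ * S) * (A * T * p₂) + (p₂ * S) * (A * p * p₂) + (p₂ * p) * A * (T * p₂) := by
          rw [hC]; noncomm_ring
      _ = 0 := by rw [h2S, hT2']; simp
  have h1 : p₁ * C * p₁ = p₁ * A * p₁ := by
    calc p₁ * C * p₁
        = (p₁ * S) * A * (T * p₁) + (p₁ * S) * A * (p * p₁) + (p₁ * p) * A * (T * p₁) := by
          rw [hC]; noncomm_ring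
      _ = (p₁ - p) * A * (p₁ - p) + (p₁ - p) * A * p + p * A * (p₁ - p) := by
          rw [h1S, hT1', hpp₁, hp₁p]
      _ = p₁ * A * p₁ - p * A * p := by noncomm_ring
      _ = p₁ * A * p₁ := by rw [hA0', sub_zero]
  have hB1 : p₁ * B * p₁ = 0 := by
    have h : p₁ * (A - C) * p₁ = p₁ * A * p₁ - p₁ * C * p₁ := by noncomm_ring
    rw [hB, h, h1, sub_self]
  have hC2 : p₂ * C * p₂ = 0 := h2
  refine ⟨B, C, hBsym, hCsym, ?_, ?_, ?_⟩
  · have h : p₁ * (B * p₁) = 0 := by rw [← mul_assoc]; exact hB1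
    exact h
  · have h : p₂ * (C * p₂) = 0 := by rw [← mul_assoc]; exact hC2
    exact h
  · rw [hB]; abel

end Aux

theorem stmt19 {H : Type*} [NormedAddCommGroup H] [InnerProductSpace ℂ H]
    [FiniteDimensional ℂ H] (U₁ U₂ : Submodule ℂ H) :
    ({A : H →ₗ[ℂ] H | A.IsSymmetric ∧
        projOn (U₁ ⊓ U₂) ∘ₗ A ∘ₗ projOn (U₁ ⊓ U₂) = 0} =
      {B : H →ₗ[ℂ] H | B.IsSymmetric ∧ projOn U₁ ∘ₗ B ∘ₗ projOn U₁ = 0} +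
        {C : H →ₗ[ℂ] H | C.IsSymmetric ∧ projOn U₂ ∘ₗ C ∘ₗ projOn U₂ = 0}) ∧
    ∀ A : H →ₗ[ℂ] H, A.IsSymmetric →
      projOn (U₁ ⊓ U₂) ∘ₗ A ∘ₗ projOn (U₁ ⊓ U₂) = 0 →
      ∃ B C : H →ₗ[ℂ] H, B.IsSymmetric ∧ C.IsSymmetric ∧
        projOn U₁ ∘ₗ B ∘ₗ projOn U₁ = 0 ∧ projOn U₂ ∘ₗ C ∘ₗ projOn U₂ = 0 ∧
        A = B + C := by
  constructor
  · ext A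
    simp only [Set.mem_setOf_eq, Set.mem_add]
    constructor
    · rintro ⟨hAs, hA0⟩
      obtain ⟨B, C, hBs, hCs, hB0, hC0, hsum⟩ := main_aux U₁ U₂ A hAs hA0
      exact ⟨B, ⟨hBs, hB0⟩, C, ⟨hCs, hC0⟩, hsum.symm⟩
    · rintro ⟨B, ⟨hBs, hB0⟩, C, ⟨hCs, hC0⟩, rfl⟩
      refine ⟨hBs.add hCs, ?_⟩
      simp only [LinearMap.add_comp, LinearMap.comp_add,
        easy_aux (inf_le_left : U₁ ⊓ U₂ ≤ U₁) B hB0,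
        easy_aux (inf_le_right : U₁ ⊓ U₂ ≤ U₂) C hC0, add_zero]
  · exact main_aux U₁ U₂
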